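/- For every T > 0 there is C_T < ∞ such that for all t ∈ [0,T], x ∈ ℝ^k, τ ∈ ℝ and ξ ∈ ℝ^k with ξ ≠ 0 and τ ≠ ±|ξ|, |F(t,x,τ,ξ)| ≤ C_T · [1/(1 + |τ+|ξ||/2) + 1/(1 + |τ−|ξ||/2)] · 1/(1 + |ξ|), where F(t,x,τ,ξ) = e^{−iξ·x − iτt}/(2|ξ|) · [(1 − e^{it(τ+|ξ|)})/(τ+|ξ|) − (1 − e^{it(τ−|ξ|)})/(τ−|ξ|)]. -/

import Mathlib

open Complex

lemma aux_abs_exp (t a : ℝ) : ‖(Complex.exp (Complex.I * t * a))‖ = 1 := by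
  rw [show Complex.I * (t:ℂ) * (a:ℂ) = ((t*a : ℝ):ℂ) * Complex.I by push_cast; ring,
    Complex.norm_exp_ofReal_mul_I]

lemma aux_two (t a : ℝ) : ‖(1 - Complex.exp (Complex.I * t * a))‖ ≤ 2 := by
  calc ‖(1 - Complex.exp (Complex.I * t * a))‖
      ≤ ‖(1:ℂ)‖ + ‖(Complex.exp (Complex.I * t * a))‖ := by
        simpa using norm_sub_le (1:ℂ) _
    _ ≤ 2 := by rw [aux_abs_exp]; norm_num

lemma aux_lin (t a : ℝ) : ‖(1 - Complex.exp (Complex.I * t * a))‖ ≤ 2 * (|t| * |a|) := by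
  rw [show (1 : ℂ) - Complex.exp (Complex.I * t * a) = -(Complex.exp (Complex.I * t * a) - 1) by ring,
    norm_neg]
  rcases le_or_gt (|t| * |a|) 1 with h | h
  · have := Complex.norm_exp_sub_one_le (x := Complex.I * t * a) (by
      simpa [abs_mul, Complex.norm_real] using h)
    simpa [abs_mul, Complex.norm_real, mul_assoc] using this
  · calc ‖(Complex.exp (Complex.I * t * a) - 1)‖ ≤ 2 := by
          have := aux_two t a
          rwa [show (1 : ℂ) - Complex.exp (Complex.I * t * a) = -(Complex.exp (Complex.I * t * a) - 1) by ring,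
            norm_neg] at this
      _ ≤ 2 * (|t| * |a|) := by nlinarith

lemma aux_g (T t a : ℝ) (hT : 0 < T) (ht0 : 0 ≤ t) (htT : t ≤ T) (ha : a ≠ 0) :
    ‖((1 - Complex.exp (Complex.I * t * a)) / a)‖
      ≤ (4*T+4) * (1/(1+|a|/2)) := by
  have hapos : 0 < |a| := abs_pos.mpr ha
  rw [norm_div, Complex.norm_real, Real.norm_eq_abs]
  rw [div_le_iff₀ hapos]
  have h2 := aux_two t a
  have hl := aux_lin t a
  rw [_root_.abs_of_nonneg ht0] at hl
  have hden : (0:ℝ) < 1 + |a|/2 := by positivity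
  rcases le_or_gt (|a|) 2 with h | h
  · have : (2*T+2) ≤ (4*T+4) * (1/(1+|a|/2)) := by
      rw [mul_one_div, le_div_iff₀ hden]
      nlinarith
    nlinarith
  · have : (2:ℝ) ≤ (4*T+4) * (1/(1+|a|/2)) * |a| := by
      rw [mul_one_div, div_mul_eq_mul_div, le_div_iff₀ hden]
      nlinarith
    nlinarith

lemma aux_rep (t a : ℝ) (ha : a ≠ 0) :
    (1 - Complex.exp (Complex.I * t * a)) / a
      = -Complex.I * ∫ s in (0:ℝ)..t, Complex.exp ((Complex.I * a) * s) := by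
  have hIa : Complex.I * (a:ℂ) ≠ 0 := by
    simp [Complex.I_ne_zero, Complex.ofReal_ne_zero.mpr ha]
  rw [integral_exp_mul_complex hIa]
  have haC : (a:ℂ) ≠ 0 := Complex.ofReal_ne_zero.mpr ha
  field_simp
  ring_nf
  rw [Complex.ofReal_zero, mul_zero, Complex.exp_zero]
  ring

lemma aux_diff (t b c : ℝ) (ht0 : 0 ≤ t) (hb : b ≠ 0) (hc : c ≠ 0) :
    ‖((1 - Complex.exp (Complex.I * t * b)) / b
      - (1 - Complex.exp (Complex.I * t * c)) / c)‖ ≤ 2 * t^2 * |b - c| := by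
  rw [aux_rep t b hb, aux_rep t c hc, ← mul_sub]
  have hib : IntervalIntegrable (fun s : ℝ => Complex.exp ((Complex.I * b) * s))
      MeasureTheory.volume 0 t := (Continuous.intervalIntegrable (by fun_prop) _ _)
  have hic : IntervalIntegrable (fun s : ℝ => Complex.exp ((Complex.I * c) * s))
      MeasureTheory.volume 0 t := (Continuous.intervalIntegrable (by fun_prop) _ _)
  rw [← intervalIntegral.integral_sub hib hic, norm_mul]
  have h1 : ‖(-Complex.I)‖ = 1 := by simp
  rw [h1, one_mul]
  have key : ∀ s ∈ Set.uIoc (0:ℝ) t,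
      ‖Complex.exp ((Complex.I * b) * s) - Complex.exp ((Complex.I * c) * s)‖
        ≤ 2 * (t * |b - c|) := by
    intro s hs
    rw [Set.uIoc_of_le ht0] at hs
    have hs0 : 0 < s := hs.1
    have hst : s ≤ t := hs.2
    have hfac : Complex.exp ((Complex.I * b) * s) - Complex.exp ((Complex.I * c) * s)
        = -(Complex.exp ((Complex.I * c) * s)
            * (1 - Complex.exp (Complex.I * s * ((b - c : ℝ) : ℂ)))) := by
      rw [mul_sub, ← Complex.exp_add]
      push_cast
      ring_nf
    rw [hfac, norm_neg, norm_mul]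
    have h2 : ‖(Complex.exp ((Complex.I * c) * s))‖ = 1 := by
      rw [show (Complex.I * c) * s = Complex.I * (s:ℂ) * (c:ℂ) by ring, aux_abs_exp]
    rw [h2, one_mul]
    calc ‖(1 - Complex.exp (Complex.I * s * ((b - c : ℝ):ℂ)))‖
        ≤ 2 * (|s| * |b - c|) := aux_lin s (b - c)
      _ ≤ 2 * (t * |b - c|) := by
          have : |s| = s := _root_.abs_of_nonneg hs0.le
          nlinarith [abs_nonneg (b - c)]
  calc ‖∫ s in (0:ℝ)..t, (Complex.exp ((Complex.I * b) * s)
          - Complex.exp ((Complex.I * c) * s))‖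
      ≤ 2 * (t * |b - c|) * |t - 0| :=
        intervalIntegral.norm_integral_le_of_norm_le_const key
    _ = 2 * t^2 * |b - c| := by
        rw [sub_zero, _root_.abs_of_nonneg ht0]; ring

set_option maxHeartbeats 1000000 in
lemma aux_key (T t τ r : ℝ) (hT : 0 < T) (ht0 : 0 ≤ t) (htT : t ≤ T) (hr : 0 < r)
    (hb : τ + r ≠ 0) (hc : τ - r ≠ 0) :
    ‖((1 - Complex.exp (Complex.I * t * ((τ + r : ℝ) : ℂ))) / ((τ + r : ℝ) : ℂ)
      - (1 - Complex.exp (Complex.I * t * ((τ - r : ℝ) : ℂ))) / ((τ - r : ℝ) : ℂ))‖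
    ≤ 2 * r * ((7*T^2 + 6*T + 6) * (1/(1 + |τ + r|/2) + 1/(1 + |τ - r|/2)) * (1/(1 + r))) := by
  have hbpos : 0 < |τ + r| := abs_pos.mpr hb
  have hcpos : 0 < |τ - r| := abs_pos.mpr hc
  have hBpos : (0:ℝ) < 1/(1 + |τ + r|/2) := by positivity
  have hCpos : (0:ℝ) < 1/(1 + |τ - r|/2) := by positivity
  have h1r : (0:ℝ) < 1 + r := by linarith
  rcases le_or_gt (1/2) r with hr2 | hr2
  · -- Case A : r ≥ 1/2, bound each term separately
    have hA : ‖((1 - Complex.exp (Complex.I * t * ((τ + r : ℝ) : ℂ))) / ((τ + r : ℝ) : ℂ)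
        - (1 - Complex.exp (Complex.I * t * ((τ - r : ℝ) : ℂ))) / ((τ - r : ℝ) : ℂ))‖
        ≤ (4*T+4) * (1/(1 + |τ + r|/2)) + (4*T+4) * (1/(1 + |τ - r|/2)) := by
      calc ‖_‖ ≤ ‖((1 - Complex.exp (Complex.I * t * ((τ + r : ℝ) : ℂ))) / ((τ + r : ℝ) : ℂ))‖
            + ‖((1 - Complex.exp (Complex.I * t * ((τ - r : ℝ) : ℂ))) / ((τ - r : ℝ) : ℂ))‖ :=
          norm_sub_le _ _
        _ ≤ _ := add_le_add (aux_g T t (τ+r) hT ht0 htT hb) (aux_g T t (τ-r) hT ht0 htT hc)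
    refine hA.trans ?_
    have hfac : (4*T+4) * (1 + r) ≤ 2 * r * (7*T^2 + 6*T + 6) := by nlinarith [sq_nonneg T]
    rw [show 2 * r * ((7*T^2 + 6*T + 6) * (1/(1 + |τ + r|/2) + 1/(1 + |τ - r|/2)) * (1/(1 + r)))
        = (2 * r * (7*T^2 + 6*T + 6) / (1 + r)) * (1/(1 + |τ + r|/2) + 1/(1 + |τ - r|/2)) by ring]
    have h4 : (4*T+4 : ℝ) ≤ 2 * r * (7*T^2 + 6*T + 6) / (1 + r) := by
      rw [le_div_iff₀ h1r]; nlinarith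
    nlinarith [add_pos hBpos hCpos, mul_le_mul_of_nonneg_right h4 (add_pos hBpos hCpos).le]
  · -- Case B : r < 1/2
    have hinv : (2:ℝ)/3 ≤ 1/(1 + r) := by
      rw [le_div_iff₀ h1r]; linarith
    rcases le_or_gt (|τ|) 2 with hτ | hτ
    · -- B1 : |τ| ≤ 2
      have hd := aux_diff t (τ + r) (τ - r) ht0 hb hc
      have hbc : |(τ + r) - (τ - r)| = 2 * r := by
        rw [show (τ + r) - (τ - r) = 2*r by ring, _root_.abs_of_nonneg (by linarith)]
      rw [hbc] at hd
      refine hd.trans ?_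
      have hbu : |τ + r| ≤ 5/2 := by
        calc |τ + r| ≤ |τ| + |r| := abs_add_le τ r
          _ ≤ 5/2 := by rw [_root_.abs_of_nonneg hr.le]; linarith
      have hBge : (4:ℝ)/9 ≤ 1/(1 + |τ + r|/2) := by
        rw [le_div_iff₀ (by positivity : (0:ℝ) < 1 + |τ + r|/2)]; linarith
      have ht2 : t^2 ≤ T^2 := by nlinarith
      have hKpos : (0:ℝ) < 7*T^2 + 6*T + 6 := by positivity
      have hsum : (4:ℝ)/9 ≤ 1/(1 + |τ + r|/2) + 1/(1 + |τ - r|/2) := by linarith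
      have step : (7*T^2+6*T+6)*(4/9)*(2/3)
          ≤ (7*T^2+6*T+6)*(1/(1 + |τ + r|/2) + 1/(1 + |τ - r|/2))*(1/(1+r)) :=
        mul_le_mul (mul_le_mul_of_nonneg_left hsum hKpos.le) hinv (by norm_num) (by positivity)
      have step2 := mul_le_mul_of_nonneg_left step (by linarith : (0:ℝ) ≤ 2*r)
      nlinarith [step2, mul_le_mul_of_nonneg_right ht2 hr.le, mul_nonneg hr.le (sq_nonneg T), sq_nonneg T]
    · -- B2 : |τ| > 2
      have hτpos : (0:ℝ) < |τ| := by linarith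
      have hτne : |τ| ≠ 0 := ne_of_gt hτpos
      have hbl : (3/4)*|τ| ≤ |τ + r| := by
        have h1 : |τ| - |τ + r| ≤ |τ - (τ + r)| := abs_sub_abs_le_abs_sub _ _
        have h2 : |τ - (τ + r)| = r := by
          rw [show τ - (τ + r) = -r by ring, abs_neg, _root_.abs_of_pos hr]
        linarith
      have hcl : (3/4)*|τ| ≤ |τ - r| := by
        have h1 : |τ| - |τ - r| ≤ |τ - (τ - r)| := abs_sub_abs_le_abs_sub _ _
        have h2 : |τ - (τ - r)| = r := by
          rw [show τ - (τ - r) = r by ring, _root_.abs_of_pos hr]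
        linarith
      have hcu : |τ - r| ≤ |τ| + 1/2 := by
        calc |τ - r| = |τ + (-r)| := by ring_nf
          _ ≤ |τ| + |(-r)| := abs_add_le _ _
          _ ≤ |τ| + 1/2 := by rw [abs_neg, _root_.abs_of_pos hr]; linarith
      have hbC : ((τ + r : ℝ) : ℂ) ≠ 0 := Complex.ofReal_ne_zero.mpr hb
      have hcC : ((τ - r : ℝ) : ℂ) ≠ 0 := Complex.ofReal_ne_zero.mpr hc
      have hE : Complex.exp (Complex.I * t * ((τ + r : ℝ) : ℂ))
          = Complex.exp (Complex.I * t * ((τ - r : ℝ) : ℂ))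
            * Complex.exp (Complex.I * t * ((2*r : ℝ) : ℂ)) := by
        rw [← Complex.exp_add]
        congr 1
        push_cast
        ring
      have gen : ∀ (Ec D B C : ℂ), B ≠ 0 → C ≠ 0 →
          (1 - Ec*D)/B - (1-Ec)/C = Ec*(1-D)/B - (1-Ec)*(B-C)/(B*C) := by
        intro Ec D B C hB hC
        field_simp
        ring
      have h2r : ((τ + r : ℝ) : ℂ) - ((τ - r : ℝ) : ℂ) = ((2*r : ℝ) : ℂ) := by
        push_cast; ring
      have hid : (1 - Complex.exp (Complex.I * t * ((τ + r : ℝ) : ℂ))) / ((τ + r : ℝ) : ℂ)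
            - (1 - Complex.exp (Complex.I * t * ((τ - r : ℝ) : ℂ))) / ((τ - r : ℝ) : ℂ)
          = Complex.exp (Complex.I * t * ((τ - r : ℝ) : ℂ))
              * (1 - Complex.exp (Complex.I * t * ((2*r : ℝ) : ℂ))) / ((τ + r : ℝ) : ℂ)
            - (1 - Complex.exp (Complex.I * t * ((τ - r : ℝ) : ℂ))) * ((2*r : ℝ) : ℂ)
              / (((τ + r : ℝ) : ℂ) * ((τ - r : ℝ) : ℂ)) := by
        rw [hE, ← h2r]
        exact gen _ _ _ _ hbC hcC
      rw [hid]
      have hT1 : ‖(Complex.exp (Complex.I * t * ((τ - r : ℝ) : ℂ))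
            * (1 - Complex.exp (Complex.I * t * ((2*r : ℝ) : ℂ))) / ((τ + r : ℝ) : ℂ))‖
          ≤ (4*T*r) / ((3/4)*|τ|) := by
        rw [norm_div, norm_mul, aux_abs_exp, one_mul, Complex.norm_real, Real.norm_eq_abs]
        apply div_le_div₀ (by positivity) ?_ (by positivity) hbl
        calc ‖(1 - Complex.exp (Complex.I * t * ((2*r : ℝ) : ℂ)))‖
            ≤ 2 * (|t| * |2*r|) := aux_lin t (2*r)
          _ ≤ 4*T*r := by
              rw [_root_.abs_of_nonneg ht0, _root_.abs_of_nonneg (by linarith : (0:ℝ) ≤ 2*r)]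
              nlinarith
      have hT2 : ‖((1 - Complex.exp (Complex.I * t * ((τ - r : ℝ) : ℂ))) * ((2*r : ℝ) : ℂ)
            / (((τ + r : ℝ) : ℂ) * ((τ - r : ℝ) : ℂ)))‖
          ≤ (4*r) / (((3/4)*|τ|) * ((3/4)*|τ|)) := by
        rw [norm_div, norm_mul, norm_mul, Complex.norm_real, Complex.norm_real, Complex.norm_real,
          Real.norm_eq_abs, Real.norm_eq_abs, Real.norm_eq_abs]
        apply div_le_div₀ (by positivity) ?_ (by positivity) ?_
        · calc ‖(1 - Complex.exp (Complex.I * t * ((τ - r : ℝ) : ℂ)))‖ * |2*r|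
              ≤ 2 * |2*r| := by
                have := aux_two t (τ - r)
                nlinarith [abs_nonneg (2*r)]
            _ ≤ 4*r := by rw [_root_.abs_of_nonneg (by linarith : (0:ℝ) ≤ 2*r)]; linarith
        · exact mul_le_mul hbl hcl (by positivity) (abs_nonneg _)
      have htri : ‖(Complex.exp (Complex.I * t * ((τ - r : ℝ) : ℂ))
            * (1 - Complex.exp (Complex.I * t * ((2*r : ℝ) : ℂ))) / ((τ + r : ℝ) : ℂ)
          - (1 - Complex.exp (Complex.I * t * ((τ - r : ℝ) : ℂ))) * ((2*r : ℝ) : ℂ)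
              / (((τ + r : ℝ) : ℂ) * ((τ - r : ℝ) : ℂ)))‖
          ≤ (4*T*r) / ((3/4)*|τ|) + (4*r) / (((3/4)*|τ|) * ((3/4)*|τ|)) :=
        (norm_sub_le _ _).trans (add_le_add hT1 hT2)
      refine htri.trans ?_
      -- convert to 1/|τ| form
      have hw : (0:ℝ) < 1/|τ| := by positivity
      have hw2 : 1/|τ| ≤ 1/2 := by rw [div_le_div_iff₀ hτpos (by norm_num)]; linarith
      have hτ0 : τ ≠ 0 := abs_pos.mp hτpos
      have e1 : (4*T*r) / ((3/4)*|τ|) = (16/3)*(T*(r*(1/|τ|))) := by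
        field_simp; ring
      have e2 : (4*r) / (((3/4)*|τ|) * ((3/4)*|τ|)) = (64/9)*(r*((1/|τ|)*(1/|τ|))) := by
        field_simp [sq_abs]
        ring
      rw [e1, e2]
      have hCge : (8/9)*(1/|τ|) ≤ 1/(1 + |τ - r|/2) := by
        have h3 : 1 + |τ - r|/2 ≤ (9/8)*|τ| := by linarith
        calc (8/9)*(1/|τ|) = 1/((9/8)*|τ|) := by field_simp
          _ ≤ 1/(1 + |τ - r|/2) := by
            apply one_div_le_one_div_of_le (by positivity) h3
      have hKpos : (0:ℝ) < 7*T^2 + 6*T + 6 := by positivity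
      have hsum : (8/9)*(1/|τ|) ≤ 1/(1 + |τ + r|/2) + 1/(1 + |τ - r|/2) := by linarith
      have step : (7*T^2+6*T+6)*((8/9)*(1/|τ|))*(2/3)
          ≤ (7*T^2+6*T+6)*(1/(1 + |τ + r|/2) + 1/(1 + |τ - r|/2))*(1/(1+r)) :=
        mul_le_mul (mul_le_mul_of_nonneg_left hsum hKpos.le) hinv (by norm_num) (by positivity)
      have step2 := mul_le_mul_of_nonneg_left step (by linarith : (0:ℝ) ≤ 2*r)
      nlinarith [step2, mul_nonneg (mul_nonneg hr.le hw.le) hT.le,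
        mul_nonneg hr.le hw.le, mul_nonneg (mul_nonneg hr.le hw.le) (sq_nonneg T),
        mul_le_mul_of_nonneg_left hw2 (mul_nonneg hr.le hw.le)]

theorem stmt_16 (k : ℕ) (T : ℝ) (hT : 0 < T) :
    ∃ C : ℝ, ∀ t ∈ Set.Icc (0 : ℝ) T, ∀ x : EuclideanSpace ℝ (Fin k),
      ∀ τ : ℝ, ∀ ξ : EuclideanSpace ℝ (Fin k),
        ξ ≠ 0 → τ ≠ ‖ξ‖ → τ ≠ -‖ξ‖ →
        ‖(Complex.exp (-(Complex.I * ((inner ℝ ξ x : ℝ) : ℂ)) - Complex.I * τ * t) /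
              (2 * (‖ξ‖ : ℂ)) *
            ((1 - Complex.exp (Complex.I * t * ((τ : ℂ) + ‖ξ‖))) / ((τ : ℂ) + ‖ξ‖)
              - (1 - Complex.exp (Complex.I * t * ((τ : ℂ) - ‖ξ‖))) / ((τ : ℂ) - ‖ξ‖)))‖ ≤
        C * (1 / (1 + |τ + ‖ξ‖| / 2) + 1 / (1 + |τ - ‖ξ‖| / 2)) * (1 / (1 + ‖ξ‖)) := by
  refine ⟨7*T^2 + 6*T + 6, ?_⟩
  rintro t ⟨ht0, htT⟩ x τ ξ hξ hτ1 hτ2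
  have hr : 0 < ‖ξ‖ := norm_pos_iff.mpr hξ
  have hb : τ + ‖ξ‖ ≠ 0 := fun h => hτ2 (by linarith)
  have hc : τ - ‖ξ‖ ≠ 0 := fun h => hτ1 (by linarith)
  have ecast1 : ((τ : ℂ) + (‖ξ‖ : ℂ)) = ((τ + ‖ξ‖ : ℝ) : ℂ) := by push_cast; ring
  have ecast2 : ((τ : ℂ) - (‖ξ‖ : ℂ)) = ((τ - ‖ξ‖ : ℝ) : ℂ) := by push_cast; ring
  rw [ecast1, ecast2, norm_mul, norm_div]
  have habsE : ‖(Complex.exp (-(Complex.I * ((inner ℝ ξ x : ℝ) : ℂ))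
      - Complex.I * τ * t))‖ = 1 := by
    rw [show -(Complex.I * (((inner ℝ ξ x : ℝ) : ℝ) : ℂ)) - Complex.I * τ * t
        = ((-((inner ℝ ξ x : ℝ) + τ * t) : ℝ) : ℂ) * Complex.I by push_cast; ring,
      Complex.norm_exp_ofReal_mul_I]
  rw [habsE]
  have habs2 : ‖(2 * (‖ξ‖ : ℂ))‖ = 2 * ‖ξ‖ := by
    rw [norm_mul, Complex.norm_two, Complex.norm_real, Real.norm_eq_abs, _root_.abs_of_pos hr]
  rw [habs2]
  have hk := aux_key T t τ ‖ξ‖ hT ht0 htT hr hb hc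
  calc 1 / (2 * ‖ξ‖) * ‖((1 - Complex.exp (Complex.I * t * ((τ + ‖ξ‖ : ℝ) : ℂ))) / ((τ + ‖ξ‖ : ℝ) : ℂ)
          - (1 - Complex.exp (Complex.I * t * ((τ - ‖ξ‖ : ℝ) : ℂ))) / ((τ - ‖ξ‖ : ℝ) : ℂ))‖
      ≤ 1 / (2 * ‖ξ‖) * (2 * ‖ξ‖ * ((7*T^2 + 6*T + 6)
          * (1/(1 + |τ + ‖ξ‖|/2) + 1/(1 + |τ - ‖ξ‖|/2)) * (1/(1 + ‖ξ‖)))) := by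
        exact mul_le_mul_of_nonneg_left hk (by positivity)
    _ = (7*T^2 + 6*T + 6) * (1/(1 + |τ + ‖ξ‖|/2) + 1/(1 + |τ - ‖ξ‖|/2)) * (1/(1 + ‖ξ‖)) := by
        field_simp
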